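/- Let r be a positive integer and let a, ā be integers with (a−1)(ā−1) ≡ 1 (mod r). Set w := gcd(r,a), ℓ := r/w, and let ρ be the remainder of w modulo ℓ (i.e. w = nℓ + ρ with n ∈ ℤ≥0 and 0 ≤ ρ < ℓ). Assume ρ ≠ 0. Then (ρ·(a/w) − 1)·(ρ·(ā/w) − 1) ≡ 1 (mod ρℓ). (Here w divides both a and ā, so a/w, ā/w ∈ ℤ.) Consequently the cyclic quotient singularities 1/ρℓ(1, ρa/w − 1) and 1/ρℓ(1, ρā/w − 1) are equivalent, i.e. the residue of the cone is well defined. -/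

import Mathlib

/-- With `(a-1)(ā-1) ≡ 1 (mod r)`, `w = gcd(r,a)`, `ℓ = r/w`,
`ρ = w mod ℓ` and `ρ ≠ 0`, we have
`(ρ·(a/w) - 1)·(ρ·(ā/w) - 1) ≡ 1 (mod ρℓ)`: the residues `1/ρℓ(1, ρa/w - 1)` and
`1/ρℓ(1, ρā/w - 1)` are equivalent, so the residue of the cone is well defined. -/
theorem stmt_7 (r a abar : ℤ) (hr : 0 < r)
    (h : (a - 1) * (abar - 1) ≡ 1 [ZMOD r])
    (w l ρ : ℤ) (hw : w = Int.gcd r a) (hl : l = r / w) (hρ : ρ = w % l)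
    (hρ0 : ρ ≠ 0) :
    (ρ * (a / w) - 1) * (ρ * (abar / w) - 1) ≡ 1 [ZMOD ρ * l] := by
  have hw0 : (0:ℤ) < w := by
    rw [hw]
    exact_mod_cast Int.gcd_pos_of_ne_zero_left a hr.ne'
  have hwr : w ∣ r := hw ▸ Int.gcd_dvd_left r a
  have hwa : w ∣ a := hw ▸ Int.gcd_dvd_right r a
  have hrl : r = w * l := by rw [hl, Int.mul_ediv_cancel' hwr]
  have hd : r ∣ 1 - (a - 1) * (abar - 1) := Int.ModEq.dvd h
  -- w divides abar
  have hwab : w ∣ abar := by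
    have h1 : w ∣ 1 - (a - 1) * (abar - 1) := dvd_trans hwr hd
    have h2 : abar = (1 - (a - 1) * (abar - 1)) + a * abar - a := by ring
    rw [h2]
    exact dvd_sub (dvd_add h1 (hwa.mul_right abar)) hwa
  set α := a / w with hα
  set β := abar / w with hβ
  have ha : a = w * α := (Int.mul_ediv_cancel' hwa).symm
  have hb : abar = w * β := (Int.mul_ediv_cancel' hwab).symm
  have hl1 : l ∣ α + β - w * (α * β) := by
    rcases hd with ⟨k, hk⟩
    refine ⟨k, ?_⟩
    have : w * (α + β - w * (α * β)) = w * (l * k) := by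
      have e1 : w * (l * k) = r * k := by rw [hrl]; ring
      rw [e1, ← hk, ha, hb]; ring
    exact mul_left_cancel₀ hw0.ne' this
  have hl2 : l ∣ w - ρ := by
    refine ⟨w / l, ?_⟩
    rw [hρ, Int.emod_def]; ring
  have key : l ∣ α + β - ρ * (α * β) := by
    have : α + β - ρ * (α * β) = (α + β - w * (α * β)) + (w - ρ) * (α * β) := by ring
    rw [this]
    exact dvd_add hl1 (hl2.mul_right _)
  have : ρ * l ∣ 1 - (ρ * α - 1) * (ρ * β - 1) := by
    have h3 : 1 - (ρ * α - 1) * (ρ * β - 1) = ρ * (α + β - ρ * (α * β)) := by ring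
    rw [h3]
    exact mul_dvd_mul_left ρ key
  exact (Int.modEq_iff_dvd.mpr this)
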